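/- Let G be a graph maximizing the Q-spread s_Q among all connected graphs on n vertices, let x be a nonnegative unit eigenvector of Q(G) for q1(G) and z a unit eigenvector of Q(G) for qn(G). Then for any two distinct vertices u and v: (i) if x_u + x_v > |z_u + z_v|, then u and v are adjacent in G; (ii) if x_u + x_v < |z_u + z_v| and the graph G − uv obtained by deleting the edge uv is connected, then u and v are non-adjacent in G. -/

import Mathlib

/-- The adjacency matrix of a simple graph on `Fin n`, over `ℝ`. -/
noncomputable def adjMat {n : ℕ} (G : SimpleGraph (Fin n)) : Matrix (Fin n) (Fin n) ℝ :=
  letI : DecidableRel G.Adj := Classical.decRel _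
  G.adjMatrix ℝ

/-- The set of eigenvalues of a real square matrix. -/
def eigSet {n : ℕ} (M : Matrix (Fin n) (Fin n) ℝ) : Set ℝ :=
  {mu : ℝ | ∃ x : Fin n → ℝ, x ≠ 0 ∧ M.mulVec x = mu • x}

/-- The largest eigenvalue of a real square matrix. -/
noncomputable def lamMax {n : ℕ} (M : Matrix (Fin n) (Fin n) ℝ) : ℝ := sSup (eigSet M)

/-- The least eigenvalue of a real square matrix. -/
noncomputable def lamMin {n : ℕ} (M : Matrix (Fin n) (Fin n) ℝ) : ℝ := sInf (eigSet M)

/-- `λ₁(G)`: the largest adjacency eigenvalue of `G`. -/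
noncomputable def lam1 {n : ℕ} (G : SimpleGraph (Fin n)) : ℝ := lamMax (adjMat G)

/-- The degree of a vertex. -/
noncomputable def deg {n : ℕ} (G : SimpleGraph (Fin n)) (v : Fin n) : ℕ :=
  Nat.card {u : Fin n // G.Adj v u}

/-- The signless Laplacian `Q(G) = D(G) + A(G)`. -/
noncomputable def signlessLap {n : ℕ} (G : SimpleGraph (Fin n)) : Matrix (Fin n) (Fin n) ℝ :=
  Matrix.diagonal (fun v => (deg G v : ℝ)) + adjMat G

/-- `q₁(G)`: the largest signless Laplacian eigenvalue. -/
noncomputable def q1 {n : ℕ} (G : SimpleGraph (Fin n)) : ℝ := lamMax (signlessLap G)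

/-- `qₙ(G)`: the least signless Laplacian eigenvalue. -/
noncomputable def qmin {n : ℕ} (G : SimpleGraph (Fin n)) : ℝ := lamMin (signlessLap G)

/-- The `Q`-spread `s_Q(G) = q₁(G) - qₙ(G)`. -/
noncomputable def sQ {n : ℕ} (G : SimpleGraph (Fin n)) : ℝ := q1 G - qmin G

/-- The complete split graph `CS_{n,ω}`: a clique on the first `ω` vertices, completely
joined to an independent set on the remaining `n - ω` vertices. -/
def CS (n w : ℕ) : SimpleGraph (Fin n) where
  Adj u v := u ≠ v ∧ ((u : ℕ) < w ∨ (v : ℕ) < w)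
  symm := by constructor; intro u v h; exact ⟨h.1.symm, h.2.symm⟩
  loopless := by constructor; intro u h; exact h.1 rfl

/-- `K_{n-1}^+`: the complete graph on the first `n-1` vertices together with a pendant
vertex (the last vertex) joined to exactly one clique vertex (vertex `0`). -/
def KPlus (n : ℕ) : SimpleGraph (Fin n) where
  Adj u v := u ≠ v ∧ (((u : ℕ) < n - 1 ∧ (v : ℕ) < n - 1) ∨ (u : ℕ) = 0 ∨ (v : ℕ) = 0)
  symm := by constructor; intro u v h; refine ⟨h.1.symm, ?_⟩; tauto
  loopless := by constructor; intro u h; exact h.1 rfl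


section myaux
open Matrix
variable {n : ℕ}

open Matrix in
lemma eigSet_eq {n : ℕ} {M : Matrix (Fin n) (Fin n) ℝ} (hM : M.IsHermitian) :
    eigSet M = Set.range hM.eigenvalues := by
  have hrepr : ∀ (d : Fin n → ℝ) (j : Fin n),
      hM.eigenvectorBasis.repr (∑ i, d i • (hM.eigenvectorBasis i : EuclideanSpace ℝ (Fin n))) j
        = d j := by
    intro d j
    simp only [map_sum, _root_.map_smul, hM.eigenvectorBasis.repr_self]
    show (∑ x, d x • EuclideanSpace.single x (1:ℝ)).ofLp j = d j
    rw [WithLp.ofLp_sum, Finset.sum_apply]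
    have : ∀ x : Fin n, (d x • EuclideanSpace.single x (1:ℝ)) j
        = if j = x then d x else 0 := by
      intro x
      show d x * (EuclideanSpace.single x (1:ℝ)).ofLp j = _
      rw [EuclideanSpace.single_apply]
      by_cases h : j = x <;> simp [h]
    simp only [this]
    simp
  ext t
  constructor
  · rintro ⟨x, hx0, hx⟩
    set b := hM.eigenvectorBasis with hb
    set c : Fin n → ℝ := fun i => b.repr (WithLp.toLp 2 x) i with hc
    have hxe : (WithLp.toLp 2 x : EuclideanSpace ℝ (Fin n)) = ∑ i, c i • b i := (b.sum_repr _).symm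
    have hc0 : ∃ i, c i ≠ 0 := by
      by_contra h
      push_neg at h
      apply hx0
      have : (WithLp.toLp 2 x : EuclideanSpace ℝ (Fin n)) = 0 := by
        rw [hxe]; simp [h]
      simpa using congrArg WithLp.ofLp this
    obtain ⟨i, hi⟩ := hc0
    refine ⟨i, ?_⟩
    have h1 : M.mulVec x = ∑ j, (c j * hM.eigenvalues j) • (b j : Fin n → ℝ) := by
      conv_lhs => rw [show (x : Fin n → ℝ) = ∑ i, c i • (b i : Fin n → ℝ) from by simpa using congrArg WithLp.ofLp hxe]
      rw [show ∀ y : Fin n → ℝ, M.mulVec y = M.mulVecLin y from fun _ => rfl, map_sum]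
      refine Finset.sum_congr rfl fun j _ => ?_
      rw [_root_.map_smul, Matrix.mulVecLin_apply]
      calc c j • M *ᵥ (b j : Fin n → ℝ)
          = c j • (hM.eigenvalues j • (b j : Fin n → ℝ)) :=
            congrArg (c j • ·) (hM.mulVec_eigenvectorBasis j)
        _ = (c j * hM.eigenvalues j) • (b j : Fin n → ℝ) := smul_smul _ _ _
    have h2 : t • x = ∑ j, (t * c j) • (b j : Fin n → ℝ) := by
      conv_lhs => rw [show (x : Fin n → ℝ) = ∑ i, c i • (b i : Fin n → ℝ) from by simpa using congrArg WithLp.ofLp hxe]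
      rw [Finset.smul_sum]
      simp [smul_smul]
    have h3 : t * c i = c i * hM.eigenvalues i := by
      have hh : ∑ j, (c j * hM.eigenvalues j) • b j = ∑ j, (t * c j) • b j := by
        apply WithLp.ofLp_injective
        simpa [h1, h2] using hx
      have := congrArg (fun y : EuclideanSpace ℝ (Fin n) => b.repr y i) hh
      simp only [hrepr] at this
      linarith
    rcases mul_eq_mul_right_iff.mp (by linarith [h3] : hM.eigenvalues i * c i = t * c i) with h | h
    · exact h
    · exact absurd h hi
  · rintro ⟨i, rfl⟩
    exact ⟨hM.eigenvectorBasis i, by simpa using hM.eigenvectorBasis.orthonormal.ne_zero i,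
      hM.mulVec_eigenvectorBasis i⟩

open Matrix in
lemma rayleigh_bounds {n : ℕ} {M : Matrix (Fin n) (Fin n) ℝ} (hM : M.IsHermitian)
    (y : Fin n → ℝ) (hy : ∑ v, y v ^ 2 = 1) :
    lamMin M ≤ y ⬝ᵥ M.mulVec y ∧ y ⬝ᵥ M.mulVec y ≤ lamMax M := by
  have hne : Nonempty (Fin n) := by
    by_contra h
    rw [not_nonempty_iff] at h
    rw [Finset.univ_eq_empty, Finset.sum_empty] at hy
    norm_num at hy
  set b := hM.eigenvectorBasis with hb
  set c : Fin n → ℝ := fun i => b.repr (WithLp.toLp 2 y) i with hc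
  set μ := hM.eigenvalues with hμ
  have hxe : (WithLp.toLp 2 y : EuclideanSpace ℝ (Fin n)) = ∑ i, c i • b i := (b.sum_repr _).symm
  have hn2 : ∀ w : EuclideanSpace ℝ (Fin n), ‖w‖ ^ 2 = ∑ i, w i ^ 2 := by
    intro w
    rw [EuclideanSpace.norm_eq, Real.sq_sqrt (by positivity)]
    simp [sq_abs]
  have hsum : ∑ i, c i ^ 2 = 1 := by
    have h1 : ∑ i, c i ^ 2 = ‖b.repr (WithLp.toLp 2 y)‖ ^ 2 := (hn2 (b.repr _)).symm
    have h2 : ‖b.repr (WithLp.toLp 2 y : EuclideanSpace ℝ (Fin n))‖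
        = ‖(WithLp.toLp 2 y : EuclideanSpace ℝ (Fin n))‖ := b.repr.norm_map _
    rw [h1, h2, hn2]
    exact hy
  have h1 : M.mulVec y = ∑ j, (c j * μ j) • (b j : Fin n → ℝ) := by
    conv_lhs => rw [show (y : Fin n → ℝ) = ∑ i, c i • (b i : Fin n → ℝ) from by simpa using congrArg WithLp.ofLp hxe]
    rw [show ∀ w : Fin n → ℝ, M.mulVec w = M.mulVecLin w from fun _ => rfl, map_sum]
    refine Finset.sum_congr rfl fun j _ => ?_
    rw [_root_.map_smul, Matrix.mulVecLin_apply]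
    calc c j • M *ᵥ (b j : Fin n → ℝ)
        = c j • (μ j • (b j : Fin n → ℝ)) := congrArg (c j • ·) (hM.mulVec_eigenvectorBasis j)
      _ = (c j * μ j) • (b j : Fin n → ℝ) := smul_smul _ _ _
  have hyb : ∀ j, y ⬝ᵥ (b j : Fin n → ℝ) = c j := by
    intro j
    have h0 : c j = inner ℝ (b j) (WithLp.toLp 2 y : EuclideanSpace ℝ (Fin n)) :=
      b.repr_apply_apply _ j
    rw [h0, EuclideanSpace.inner_eq_star_dotProduct]
    simp [dotProduct, mul_comm]
  have hdps : y ⬝ᵥ (∑ j, (c j * μ j) • (b j : Fin n → ℝ)) =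
      ∑ j, y ⬝ᵥ ((c j * μ j) • (b j : Fin n → ℝ)) := by
    simp only [dotProduct, Finset.sum_apply, Finset.mul_sum]
    rw [Finset.sum_comm]
  have hform : y ⬝ᵥ M.mulVec y = ∑ i, μ i * c i ^ 2 := by
    rw [h1, hdps]
    refine Finset.sum_congr rfl fun j _ => ?_
    rw [dotProduct_smul, hyb j, smul_eq_mul]
    ring
  obtain ⟨imax, himax⟩ := Finite.exists_max μ
  obtain ⟨imin, himin⟩ := Finite.exists_min μ
  have hba : BddAbove (eigSet M) := by
    rw [eigSet_eq hM]; exact (Set.finite_range _).bddAbove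
  have hbb : BddBelow (eigSet M) := by
    rw [eigSet_eq hM]; exact (Set.finite_range _).bddBelow
  constructor
  · have hle : μ imin ≤ y ⬝ᵥ M.mulVec y := by
      rw [hform]
      calc μ imin = μ imin * ∑ i, c i ^ 2 := by rw [hsum, mul_one]
        _ = ∑ i, μ imin * c i ^ 2 := by rw [Finset.mul_sum]
        _ ≤ ∑ i, μ i * c i ^ 2 :=
            Finset.sum_le_sum fun i _ => mul_le_mul_of_nonneg_right (himin i) (sq_nonneg _)
    refine le_trans (csInf_le hbb ?_) hle
    rw [eigSet_eq hM]; exact ⟨imin, rfl⟩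
  · have hle : y ⬝ᵥ M.mulVec y ≤ μ imax := by
      rw [hform]
      calc ∑ i, μ i * c i ^ 2 ≤ ∑ i, μ imax * c i ^ 2 :=
            Finset.sum_le_sum fun i _ => mul_le_mul_of_nonneg_right (himax i) (sq_nonneg _)
        _ = μ imax * ∑ i, c i ^ 2 := by rw [Finset.mul_sum]
        _ = μ imax := by rw [hsum, mul_one]
    refine le_trans hle (le_csSup hba ?_)
    rw [eigSet_eq hM]; exact ⟨imax, rfl⟩

lemma adjMat_apply (G : SimpleGraph (Fin n)) [DecidableRel G.Adj] (i j : Fin n) :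
    adjMat G i j = if G.Adj i j then (1:ℝ) else 0 := by
  by_cases h : G.Adj i j <;> simp [adjMat, h]

lemma deg_eq_sum (G : SimpleGraph (Fin n)) (i : Fin n) :
    (deg G i : ℝ) = ∑ j, adjMat G i j := by
  classical
  have h1 : deg G i = (Finset.univ.filter (fun j => G.Adj i j)).card := by
    rw [deg, Nat.card_eq_fintype_card]
    exact Fintype.card_subtype _
  rw [h1]
  rw [show ∑ j, adjMat G i j = ∑ j, if G.Adj i j then (1:ℝ) else 0 from
    Finset.sum_congr rfl fun j _ => adjMat_apply G i j]
  rw [Finset.sum_boole]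

lemma lap_herm (G : SimpleGraph (Fin n)) : (signlessLap G).IsHermitian := by
  classical
  unfold Matrix.IsHermitian
  ext i j
  simp only [Matrix.conjTranspose_apply, signlessLap, Matrix.add_apply, Matrix.diagonal_apply,
    adjMat_apply, star_trivial]
  by_cases h : i = j
  · subst h; simp
  · simp [h, Ne.symm h, SimpleGraph.adj_comm]


variable {n : ℕ}

/-- indicator vector of `{u, v}`. -/
def wvec (u v : Fin n) : Fin n → ℝ := fun i => if i = u ∨ i = v then 1 else 0

lemma wvec_dot (u v : Fin n) (huv : u ≠ v) (y : Fin n → ℝ) :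
    dotProduct (wvec u v) y = y u + y v := by
  unfold dotProduct wvec
  have h : ∀ i : Fin n, (if i = u ∨ i = v then (1:ℝ) else 0) * y i
      = (if i = u then y i else 0) + (if i = v then y i else 0) := by
    intro i
    by_cases h1 : i = u <;> by_cases h2 : i = v <;> simp_all
  simp only [h]
  rw [Finset.sum_add_distrib, Finset.sum_ite_eq' Finset.univ u y,
    Finset.sum_ite_eq' Finset.univ v y]
  simp

lemma quad_w (u v : Fin n) (huv : u ≠ v) (y : Fin n → ℝ) :
    y ⬝ᵥ (Matrix.vecMulVec (wvec u v) (wvec u v)).mulVec y = (y u + y v) ^ 2 := by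
  have h1 : (Matrix.vecMulVec (wvec u v) (wvec u v)).mulVec y
      = fun i => wvec u v i * dotProduct (wvec u v) y := by
    funext i
    simp [Matrix.mulVec, Matrix.vecMulVec_apply, dotProduct, Finset.mul_sum, mul_assoc]
  rw [h1]
  have h2 : y ⬝ᵥ (fun i => wvec u v i * dotProduct (wvec u v) y)
      = (dotProduct y (wvec u v)) * (dotProduct (wvec u v) y) := by
    simp [dotProduct, Finset.sum_mul, mul_assoc]
  rw [h2, dotProduct_comm, wvec_dot u v huv y, sq]

lemma lap_add (G H : SimpleGraph (Fin n)) (u v : Fin n) (huv : u ≠ v) (hG : ¬ G.Adj u v)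
    (hH : ∀ a b, H.Adj a b ↔ G.Adj a b ∨ (a = u ∧ b = v) ∨ (a = v ∧ b = u)) :
    signlessLap H = signlessLap G + Matrix.vecMulVec (wvec u v) (wvec u v) := by
  classical
  have hadj : ∀ i j, adjMat H i j
      = adjMat G i j + (if (i = u ∧ j = v) ∨ (i = v ∧ j = u) then (1:ℝ) else 0) := by
    intro i j
    rw [adjMat_apply, adjMat_apply]
    by_cases h1 : G.Adj i j
    · have h2 : ¬((i = u ∧ j = v) ∨ (i = v ∧ j = u)) := by
        rintro (⟨rfl, rfl⟩ | ⟨rfl, rfl⟩)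
        · exact hG h1
        · exact hG h1.symm
      have h3 : H.Adj i j := (hH i j).mpr (Or.inl h1)
      simp [h1, h2, h3]
    · by_cases h2 : (i = u ∧ j = v) ∨ (i = v ∧ j = u)
      · have h3 : H.Adj i j := (hH i j).mpr (Or.inr h2)
        simp [h1, h2, h3]
      · have h3 : ¬ H.Adj i j := fun h => by
          rcases (hH i j).mp h with h' | h'
          · exact h1 h'
          · exact h2 h'
        simp [h1, h2, h3]
  have hind : ∀ i, (∑ j, if (i = u ∧ j = v) ∨ (i = v ∧ j = u) then (1:ℝ) else 0)
      = if i = u ∨ i = v then 1 else 0 := by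
    intro i
    by_cases h1 : i = u
    · have he : ∀ j : Fin n, ((i = u ∧ j = v) ∨ (i = v ∧ j = u)) ↔ j = v := by
        intro j
        constructor
        · rintro (⟨_, rfl⟩ | ⟨h, _⟩)
          · rfl
          · exact absurd (h1.symm.trans h) huv
        · rintro rfl
          exact Or.inl ⟨h1, rfl⟩
      simp only [he]
      simp [Finset.sum_ite_eq', h1]
    · by_cases h2 : i = v
      · have he : ∀ j : Fin n, ((i = u ∧ j = v) ∨ (i = v ∧ j = u)) ↔ j = u := by
          intro j
          constructor
          · rintro (⟨h, _⟩ | ⟨_, rfl⟩)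
            · exact absurd h h1
            · rfl
          · rintro rfl
            exact Or.inr ⟨h2, rfl⟩
        simp only [he]
        simp [Finset.sum_ite_eq', h1, h2]
      · have he : ∀ j : Fin n, ¬((i = u ∧ j = v) ∨ (i = v ∧ j = u)) := by
          rintro j (⟨h, _⟩ | ⟨h, _⟩)
          · exact h1 h
          · exact h2 h
        simp [he, h1, h2]
  have hdeg : ∀ i, (deg H i : ℝ) = (deg G i : ℝ) + (if i = u ∨ i = v then 1 else 0) := by
    intro i
    rw [deg_eq_sum, deg_eq_sum, ← hind i, ← Finset.sum_add_distrib]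
    exact Finset.sum_congr rfl fun j _ => hadj i j
  ext i j
  simp only [signlessLap, Matrix.add_apply, Matrix.diagonal_apply, Matrix.vecMulVec_apply,
    hadj, wvec]
  by_cases hij : i = j
  · subst hij
    rw [if_pos rfl, if_pos rfl, hdeg i]
    have h0 : ¬((i = u ∧ i = v) ∨ (i = v ∧ i = u)) := by
      rintro (⟨rfl, rfl⟩ | ⟨rfl, rfl⟩) <;> exact huv rfl
    rw [if_neg h0]
    by_cases h : i = u ∨ i = v <;> simp [h] <;> ring
  · rw [if_neg hij, if_neg hij]
    have : (if (i = u ∧ j = v) ∨ (i = v ∧ j = u) then (1:ℝ) else 0)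
        = (if i = u ∨ i = v then (1:ℝ) else 0) * (if j = u ∨ j = v then 1 else 0) := by
      by_cases h1 : i = u <;> by_cases h2 : i = v <;> by_cases h3 : j = u <;>
        by_cases h4 : j = v <;> simp_all
    rw [this]
    ring


end myaux

open Matrix

theorem stmt13 {n : ℕ} (G : SimpleGraph (Fin n)) (hconn : G.Connected)
    (hmax : ∀ H : SimpleGraph (Fin n), H.Connected → sQ H ≤ sQ G)
    (x z : Fin n → ℝ)
    (hx0 : ∀ v, 0 ≤ x v)
    (hx1 : ∑ v, x v ^ 2 = 1) (hz1 : ∑ v, z v ^ 2 = 1)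
    (hx : (signlessLap G).mulVec x = q1 G • x)
    (hz : (signlessLap G).mulVec z = qmin G • z) :
    ∀ u v : Fin n, u ≠ v →
      (|z u + z v| < x u + x v → G.Adj u v) ∧
      (x u + x v < |z u + z v| → (G.deleteEdges {s(u, v)}).Connected → ¬ G.Adj u v) := by
  intro u v huv
  have hxx : x ⬝ᵥ x = ∑ w, x w ^ 2 := by simp [dotProduct, pow_two]
  have hzz : z ⬝ᵥ z = ∑ w, z w ^ 2 := by simp [dotProduct, pow_two]
  have hq1 : x ⬝ᵥ (signlessLap G).mulVec x = q1 G := by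
    rw [hx, dotProduct_smul, smul_eq_mul, hxx, hx1, mul_one]
  have hqm : z ⬝ᵥ (signlessLap G).mulVec z = qmin G := by
    rw [hz, dotProduct_smul, smul_eq_mul, hzz, hz1, mul_one]
  constructor
  · intro hlt
    by_contra hadj
    set H := G ⊔ SimpleGraph.fromEdgeSet {s(u, v)} with hHdef
    have hHadj : ∀ a b, H.Adj a b ↔ G.Adj a b ∨ (a = u ∧ b = v) ∨ (a = v ∧ b = u) := by
      intro a b
      rw [hHdef, SimpleGraph.sup_adj, SimpleGraph.fromEdgeSet_adj]
      constructor
      · rintro (h | ⟨h, -⟩)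
        · exact Or.inl h
        · exact Or.inr (Sym2.eq_iff.mp (Set.mem_singleton_iff.mp h))
      · rintro (h | h)
        · exact Or.inl h
        · refine Or.inr ⟨Set.mem_singleton_iff.mpr (Sym2.eq_iff.mpr h), ?_⟩
          rcases h with ⟨rfl, rfl⟩ | ⟨rfl, rfl⟩
          · exact huv
          · exact huv.symm
    have hlap : signlessLap H = signlessLap G + Matrix.vecMulVec (wvec u v) (wvec u v) :=
      lap_add G H u v huv hadj hHadj
    have hconnH : H.Connected := hconn.mono le_sup_left
    have hray1 := (rayleigh_bounds (lap_herm H) x hx1).2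
    have hray2 := (rayleigh_bounds (lap_herm H) z hz1).1
    have e1 : x ⬝ᵥ (signlessLap H).mulVec x = q1 G + (x u + x v) ^ 2 := by
      rw [hlap, Matrix.add_mulVec, dotProduct_add, hq1, quad_w u v huv x]
    have e2 : z ⬝ᵥ (signlessLap H).mulVec z = qmin G + (z u + z v) ^ 2 := by
      rw [hlap, Matrix.add_mulVec, dotProduct_add, hqm, quad_w u v huv z]
    have hs := hmax H hconnH
    have hsq : (z u + z v) ^ 2 < (x u + x v) ^ 2 := by
      obtain ⟨hl, hr⟩ := abs_lt.mp hlt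
      exact sq_lt_sq' hl hr
    rw [e1] at hray1
    rw [e2] at hray2
    have : sQ G < sQ H := by
      simp only [sQ, q1, qmin] at *
      linarith
    exact absurd hs (not_le.mpr this)
  · intro hlt hconnD hadj
    set H := G.deleteEdges {s(u, v)} with hHdef
    have hHadj : ∀ a b, G.Adj a b ↔ H.Adj a b ∨ (a = u ∧ b = v) ∨ (a = v ∧ b = u) := by
      intro a b
      rw [hHdef, SimpleGraph.deleteEdges_adj]
      constructor
      · intro h
        by_cases hm : s(a, b) ∈ ({s(u, v)} : Set (Sym2 (Fin n)))
        · exact Or.inr (Sym2.eq_iff.mp (Set.mem_singleton_iff.mp hm))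
        · exact Or.inl ⟨h, hm⟩
      · rintro (⟨h, -⟩ | (⟨rfl, rfl⟩ | ⟨rfl, rfl⟩))
        · exact h
        · exact hadj
        · exact hadj.symm
    have hHn : ¬ H.Adj u v := by
      rw [hHdef, SimpleGraph.deleteEdges_adj]
      simp
    have hlap : signlessLap G = signlessLap H + Matrix.vecMulVec (wvec u v) (wvec u v) :=
      lap_add H G u v huv hHn hHadj
    have hray1 := (rayleigh_bounds (lap_herm H) x hx1).2
    have hray2 := (rayleigh_bounds (lap_herm H) z hz1).1
    have e1 : x ⬝ᵥ (signlessLap H).mulVec x = q1 G - (x u + x v) ^ 2 := by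
      have := hq1
      rw [hlap, Matrix.add_mulVec, dotProduct_add, quad_w u v huv x] at this
      linarith
    have e2 : z ⬝ᵥ (signlessLap H).mulVec z = qmin G - (z u + z v) ^ 2 := by
      have := hqm
      rw [hlap, Matrix.add_mulVec, dotProduct_add, quad_w u v huv z] at this
      linarith
    have hs := hmax H hconnD
    have hsq : (x u + x v) ^ 2 < (z u + z v) ^ 2 := by
      have h0 : 0 ≤ x u + x v := add_nonneg (hx0 u) (hx0 v)
      calc (x u + x v) ^ 2 < |z u + z v| ^ 2 := by
            apply sq_lt_sq' _ hlt
            have := abs_nonneg (z u + z v)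
            linarith
        _ = (z u + z v) ^ 2 := sq_abs _
    rw [e1] at hray1
    rw [e2] at hray2
    have : sQ G < sQ H := by
      simp only [sQ, q1, qmin] at *
      linarith
    exact absurd hs (not_le.mpr this)
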